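/- Let n ≥ 1 and ε > 0. For each i ∈ ℕ let K_i ⊆ Sⁿ be a closed spherical ε-ball, i.e., K_i = {x ∈ Sⁿ : d(x, c_i) ≤ ε} for some c_i ∈ Sⁿ, and let d_i be the diagonal (n+1)×(n+1) matrix with positive diagonal entries μ_i(0), …, μ_i(n) satisfying ∏_{j=0}^{n} μ_i(j) = 1 and μ_i(0) = max_{0≤j≤n} μ_i(j). Suppose the image sets {d_i·x/‖d_i·x‖ : x ∈ K_i} converge in the Hausdorff distance to a singleton {y}. Then: (1) y = e₀ or y = −e₀, where e₀ is the first standard basis vector of ℝ^{n+1}; (2) there exists N such that for all i > N and all j ∈ {1, …, n}, μ_i(0) > μ_i(j); and (3) μ_i(0)/max_{1≤j≤n} μ_i(j) → ∞ as i → ∞. (Lemma B.2 of the paper.) -/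

import Mathlib

open scoped RealInnerProductSpace

set_option maxHeartbeats 1000000

noncomputable section

/-- `Esp n` is `ℝ^{n+1}` with its standard inner product. -/
abbrev Esp (n : ℕ) : Type := EuclideanSpace ℝ (Fin (n + 1))

/-- The unit sphere `Sⁿ ⊆ ℝ^{n+1}`. -/
def sphereSet (n : ℕ) : Set (Esp n) := {x | ‖x‖ = 1}

/-- A convex segment in `Sⁿ`: `{(cos t)·u + (sin t)·v : 0 ≤ t ≤ a}` for an
orthonormal pair `u, v` and some `a ∈ [0, π]`. -/
def IsConvexSegment {n : ℕ} (S : Set (Esp n)) : Prop :=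
  ∃ (u v : Esp n) (a : ℝ), ‖u‖ = 1 ∧ ‖v‖ = 1 ∧ ⟪u, v⟫ = 0 ∧
    0 ≤ a ∧ a ≤ Real.pi ∧
    S = (fun t : ℝ => Real.cos t • u + Real.sin t • v) '' Set.Icc 0 a

/-- A subset of `Sⁿ` is convex if any two of its points are contained in a
convex segment contained in the set. -/
def SphConvex {n : ℕ} (A : Set (Esp n)) : Prop :=
  ∀ x ∈ A, ∀ y ∈ A, ∃ S : Set (Esp n), IsConvexSegment S ∧ S ⊆ A ∧ x ∈ S ∧ y ∈ S

/-- Convergence of a sequence of subsets of `Sⁿ` in the Hausdorff distance. -/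
def HConv {n : ℕ} (K : ℕ → Set (Esp n)) (L : Set (Esp n)) : Prop :=
  Filter.Tendsto (fun i => Metric.hausdorffDist (K i) L) Filter.atTop (nhds 0)

/-- The spherical distance `d(x, y) = arccos ⟨x, y⟩` on `Sⁿ`. -/
def sdist {n : ℕ} (x y : Esp n) : ℝ := Real.arccos ⟪x, y⟫

/-- The vector `(μ 0 * x 0, …, μ n * x n)`: the action of the diagonal matrix
with diagonal entries `μ` on `x`. -/
def diagVec {n : ℕ} (μ : Fin (n + 1) → ℝ) (x : Esp n) : Esp n :=
  (EuclideanSpace.equiv (Fin (n + 1)) ℝ).symm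
    (fun j => μ j * EuclideanSpace.equiv (Fin (n + 1)) ℝ x j)

/-- The projective map of `Sⁿ` induced by the diagonal matrix with diagonal
entries `μ`: `x ↦ d·x / ‖d·x‖`. -/
def diagAct {n : ℕ} (μ : Fin (n + 1) → ℝ) (x : Esp n) : Esp n :=
  ‖diagVec μ x‖⁻¹ • diagVec μ x

namespace LemB2

variable {n : ℕ}

lemma coord_smul (r : ℝ) (x : Esp n) (j : Fin (n+1)) : (r • x) j = r * x j := rfl
lemma coord_add (x y : Esp n) (j : Fin (n+1)) : (x + y) j = x j + y j := rfl
lemma coord_sub (x y : Esp n) (j : Fin (n+1)) : (x - y) j = x j - y j := rfl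
lemma coord_neg (x : Esp n) (j : Fin (n+1)) : (-x) j = -(x j) := rfl

lemma esp_norm_eq (x : Esp n) : ‖x‖ = Real.sqrt (∑ i, (x i)^2) := by
  rw [EuclideanSpace.norm_eq]; simp [sq_abs]

lemma abs_coord_le (x : Esp n) (j : Fin (n+1)) : |x j| ≤ ‖x‖ := by
  rw [esp_norm_eq, show |x j| = Real.sqrt ((x j)^2) by rw [Real.sqrt_sq_eq_abs]]
  exact Real.sqrt_le_sqrt (Finset.single_le_sum (f := fun i => (x i)^2)
    (fun i _ => sq_nonneg _) (Finset.mem_univ j))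

lemma sum_sq_eq_one {x : Esp n} (hx : ‖x‖ = 1) : ∑ i, (x i)^2 = 1 := by
  have := esp_norm_eq x
  rw [hx] at this
  have h := Real.sqrt_eq_one.mp this.symm
  exact h

lemma diagVec_apply (μ : Fin (n+1) → ℝ) (x : Esp n) (j : Fin (n+1)) :
    diagVec μ x j = μ j * x j := rfl

lemma diagAct_apply (μ : Fin (n+1) → ℝ) (x : Esp n) (j : Fin (n+1)) :
    diagAct μ x j = ‖diagVec μ x‖⁻¹ * (μ j * x j) := rfl

lemma diagVec_norm_pos {μ : Fin (n+1) → ℝ} (hpos : ∀ j, 0 < μ j) {x : Esp n} (hx : ‖x‖ = 1) :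
    0 < ‖diagVec μ x‖ := by
  rw [norm_pos_iff]
  intro h0
  have hx0 : x = 0 := by
    ext j
    have hj : diagVec μ x j = (0 : Esp n) j := by rw [h0]
    rw [diagVec_apply] at hj
    have : μ j * x j = 0 := hj
    have := (mul_eq_zero.mp this).resolve_left (ne_of_gt (hpos j))
    simpa using this
  rw [hx0, norm_zero] at hx; norm_num at hx

lemma diagVec_norm_le {μ : Fin (n+1) → ℝ} (hpos : ∀ j, 0 < μ j) (hmax : ∀ j, μ j ≤ μ 0)
    {x : Esp n} (hx : ‖x‖ = 1) : ‖diagVec μ x‖ ≤ μ 0 := by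
  rw [esp_norm_eq]
  have h1 : ∑ i, (diagVec μ x i)^2 ≤ (μ 0)^2 * ∑ i, (x i)^2 := by
    rw [Finset.mul_sum]
    apply Finset.sum_le_sum
    intro i _
    rw [diagVec_apply, mul_pow]
    have h2 : (μ i)^2 ≤ (μ 0)^2 := by
      have := hpos i; have := hmax i; nlinarith
    nlinarith [sq_nonneg (x i)]
  rw [sum_sq_eq_one hx, mul_one] at h1
  calc Real.sqrt (∑ i, (diagVec μ x i)^2) ≤ Real.sqrt ((μ 0)^2) := Real.sqrt_le_sqrt h1
    _ = μ 0 := by rw [Real.sqrt_sq (le_of_lt (hpos 0))]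

lemma coord_le_diagVec_norm {μ : Fin (n+1) → ℝ} (hpos : ∀ j, 0 < μ j) (x : Esp n)
    (j : Fin (n+1)) : μ j * |x j| ≤ ‖diagVec μ x‖ := by
  have := abs_coord_le (diagVec μ x) j
  rw [diagVec_apply, abs_mul, abs_of_pos (hpos j)] at this
  exact this

lemma diagAct_norm {μ : Fin (n+1) → ℝ} (hpos : ∀ j, 0 < μ j) {x : Esp n} (hx : ‖x‖ = 1) :
    ‖diagAct μ x‖ = 1 := by
  have hN := diagVec_norm_pos hpos hx
  rw [diagAct, norm_smul, norm_inv, Real.norm_eq_abs, abs_of_pos hN,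
    inv_mul_cancel₀ (ne_of_gt hN)]

lemma unit_comb {c v : Esp n} (hc : ‖c‖ = 1) (hv : ‖v‖ = 1) (hcv : ⟪c, v⟫ = 0) (t : ℝ) :
    ‖Real.cos t • c + Real.sin t • v‖ = 1 ∧
      ⟪Real.cos t • c + Real.sin t • v, c⟫ = Real.cos t := by
  constructor
  · have h := norm_add_sq_real (Real.cos t • c) (Real.sin t • v)
    rw [norm_smul, norm_smul, real_inner_smul_left, real_inner_smul_right, hcv, hc, hv,
      Real.norm_eq_abs, Real.norm_eq_abs] at h
    simp only [mul_one, mul_zero] at h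
    have h2 : ‖Real.cos t • c + Real.sin t • v‖^2 = 1 := by
      rw [h, sq_abs, sq_abs]; nlinarith [Real.sin_sq_add_cos_sq t]
    nlinarith [norm_nonneg (Real.cos t • c + Real.sin t • v)]
  · have hvc : ⟪v, c⟫ = 0 := by rw [real_inner_comm]; exact hcv
    rw [inner_add_left, real_inner_smul_left, real_inner_smul_left,
      real_inner_self_eq_norm_sq, hc, hvc]
    ring


lemma abs_le_of_sq_le' {x y : ℝ} (h : x^2 ≤ y^2) (hy : 0 ≤ y) : |x| ≤ y := by
  nlinarith [abs_nonneg x, sq_abs x]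

lemma arith3 {a2 b2 e2 : ℝ} (ha : a2 ≤ 1/64) (hb : b2 ≤ 1/64) (he : e2 ≤ 1/1000)
    (ha0 : 0 ≤ a2) (hb0 : 0 ≤ b2) (he0 : 0 ≤ e2) : 49/100 ≤ (1 - a2)*(1 - b2 - e2) := by
  nlinarith

lemma arith4 {x : ℝ} (hx : 0 ≤ x) (h : 49/100 ≤ x^2) : 7/10 ≤ x := by nlinarith

lemma arith5 {a ρ N : ℝ} (ha : -ρ ≤ a) (hN0 : 0 ≤ N) (hN1 : N ≤ 1) (hρ : 0 ≤ ρ) :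
    -ρ ≤ a*N := by
  nlinarith [mul_nonneg (by linarith : (0:ℝ) ≤ a + ρ) hN0,
    mul_nonneg hρ (by linarith : (0:ℝ) ≤ 1 - N)]

lemma arith6 {C S m P : ℝ} (hC0 : 0 < C) (hC1 : C ≤ 1) (hS0 : 0 < S) (hS1 : S ≤ 1)
    (hm : -(3*(S^2/8)) ≤ m) (hP : 7/10 ≤ P) : C*S^3/4 ≤ C*S*m + S^2*P := by
  have h7 : C*S*(-(3*(S^2/8))) ≤ C*S*m :=
    mul_le_mul_of_nonneg_left hm (by positivity)
  have h9 : S^2*(7/10) ≤ S^2*P := mul_le_mul_of_nonneg_left hP (sq_nonneg S)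
  have hCS1 : C*S ≤ 1 := mul_le_one₀ hC1 hS0.le hS1
  have h10 : C*S*S^2 ≤ S^2 := by nlinarith [mul_le_mul_of_nonneg_right hCS1 (sq_nonneg S)]
  nlinarith [h7, h9, h10]

lemma arith7 {S : ℝ} (h0 : 0 < S) (h1 : S ≤ 1) : S^2/8 ≤ 1/8 := by nlinarith

lemma arith8 {e2 a2 b2 : ℝ} (h : e2 * (1 - a2) = a2 * b2) (ha : a2 ≤ 1/64)
    (hb : b2 ≤ 1/64) (ha0 : 0 ≤ a2) (hb0 : 0 ≤ b2) (he0 : 0 ≤ e2) : e2 ≤ 1/1000 := by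
  nlinarith

lemma eq_of_sq_eq {x y : ℝ} (hx : 0 ≤ x) (hy : 0 ≤ y) (h : x^2 = y^2) : x = y := by
  nlinarith

lemma exists_good_pair (j : Fin (n+1)) (hj : j ≠ 0) {c : Esp n} (hc : ‖c‖ = 1)
    {t : ℝ} (ht0 : 0 < t) (ht4 : t ≤ Real.pi/4) :
    ∃ p q : Esp n, ‖p‖ = 1 ∧ ‖q‖ = 1 ∧ ⟪p, c⟫ = Real.cos t ∧ ⟪q, c⟫ = Real.cos t ∧
      Real.cos t * Real.sin t ^ 3 / 4 ≤ |p 0 * q j - p j * q 0| := by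
  have hπ := Real.pi_gt_three
  set S := Real.sin t with hSdef
  set C := Real.cos t with hCdef
  have hS : 0 < S := Real.sin_pos_of_pos_of_lt_pi ht0 (by linarith)
  have hS1 : S ≤ 1 := Real.sin_le_one t
  have hC : 0 < C := Real.cos_pos_of_mem_Ioo ⟨by linarith, by linarith⟩
  have hC1 : C ≤ 1 := Real.cos_le_one t
  set a := c 0 with hadef
  set b := c j with hbdef
  set ρ : ℝ := S^2/8 with hρdef
  have hρ : 0 < ρ := by positivity
  have hρ8 : ρ ≤ 1/8 := by rw [hρdef]; exact arith7 hS hS1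
  set E0 : Esp n := EuclideanSpace.single 0 1 with hE0def
  set Ej : Esp n := EuclideanSpace.single j 1 with hEjdef
  have hEj0 : Ej 0 = 0 := by
    rw [hEjdef, EuclideanSpace.single_apply]; simp [Ne.symm hj]
  have hE00 : E0 0 = 1 := by rw [hE0def, EuclideanSpace.single_apply]; simp
  have hEjj : Ej j = 1 := by rw [hEjdef, EuclideanSpace.single_apply]; simp
  have hE0j : E0 j = 0 := by rw [hE0def, EuclideanSpace.single_apply]; simp [hj]
  have hcE0 : ⟪c, E0⟫ = a := by
    rw [hE0def, EuclideanSpace.inner_single_right]; simp [hadef]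
  have hcEj : ⟪c, Ej⟫ = b := by
    rw [hEjdef, EuclideanSpace.inner_single_right]; simp [hbdef]
  have hcc : ⟪c, c⟫ = 1 := by
    rw [real_inner_self_eq_norm_sq, hc]; norm_num
  by_cases hcase : ρ^2 ≤ a^2 + b^2
  · -- Case 1 : the projection of c to the (0,j)-plane is not too small
    set r0 := Real.sqrt (a^2 + b^2) with hr0def
    have hr0 : 0 < r0 := Real.sqrt_pos.mpr (lt_of_lt_of_le (by positivity) hcase)
    have hr0sq : r0^2 = a^2 + b^2 := Real.sq_sqrt (by positivity)
    have hρr0 : ρ ≤ r0 := by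
      have := Real.sqrt_le_sqrt hcase
      rwa [Real.sqrt_sq hρ.le] at this
    set w : Esp n := a • Ej - b • E0 with hwdef
    have hwnormsq : ‖w‖^2 = a^2 + b^2 := by
      have h := norm_sub_sq_real (a • Ej) (b • E0)
      rw [norm_smul, norm_smul, real_inner_smul_left, real_inner_smul_right] at h
      have hEjE0 : ⟪Ej, E0⟫ = 0 := by
        rw [hEjdef, EuclideanSpace.inner_single_left]
        simp [hE0j]
      rw [hEjE0] at h
      simp only [Real.norm_eq_abs, mul_zero, mul_one] at h
      rw [hE0def, hEjdef, EuclideanSpace.norm_single, EuclideanSpace.norm_single] at h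
      rw [← hE0def, ← hEjdef] at h
      rw [h]; simp [sq_abs]
    have hwnorm : ‖w‖ = r0 := eq_of_sq_eq (norm_nonneg w) hr0.le (by rw [hwnormsq, hr0sq])
    set v : Esp n := r0⁻¹ • w with hvdef
    have hv : ‖v‖ = 1 := by
      rw [hvdef, norm_smul, Real.norm_eq_abs, abs_of_pos (inv_pos.mpr hr0), hwnorm,
        inv_mul_cancel₀ (ne_of_gt hr0)]
    have hcw : ⟪c, w⟫ = 0 := by
      rw [hwdef, inner_sub_right, real_inner_smul_right, real_inner_smul_right, hcEj, hcE0]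
      ring
    have hcv : ⟪c, v⟫ = 0 := by rw [hvdef, real_inner_smul_right, hcw, mul_zero]
    have hv0 : v 0 = -b/r0 := by
      rw [hvdef, coord_smul, hwdef, coord_sub, coord_smul, coord_smul, hEj0, hE00]
      field_simp
      ring
    have hvj : v j = a/r0 := by
      rw [hvdef, coord_smul, hwdef, coord_sub, coord_smul, coord_smul, hEjj, hE0j]
      field_simp
      ring
    have hnv : ‖-v‖ = 1 := by rw [norm_neg]; exact hv
    have hcnv : ⟪c, -v⟫ = 0 := by rw [inner_neg_right, hcv, neg_zero]
    obtain ⟨hp1, hpc⟩ := unit_comb hc hv hcv t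
    obtain ⟨hq1, hqc⟩ := unit_comb hc hnv hcnv t
    refine ⟨C • c + S • v, C • c + S • (-v), hp1, hq1, hpc, hqc, ?_⟩
    have hp0 : (C • c + S • v) 0 = C*a + S*(-b/r0) := by
      rw [coord_add, coord_smul, coord_smul, hv0, hadef]
    have hpj : (C • c + S • v) j = C*b + S*(a/r0) := by
      rw [coord_add, coord_smul, coord_smul, hvj, hbdef]
    have hq0 : (C • c + S • (-v)) 0 = C*a - S*(-b/r0) := by
      rw [coord_add, coord_smul, coord_smul, coord_neg, hv0, hadef]; ring
    have hqj : (C • c + S • (-v)) j = C*b - S*(a/r0) := by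
      rw [coord_add, coord_smul, coord_smul, coord_neg, hvj, hbdef]; ring
    have hdet : (C • c + S • v) 0 * (C • c + S • (-v)) j
        - (C • c + S • v) j * (C • c + S • (-v)) 0 = -(2*C*S*r0) := by
      have hr0ne : r0 ≠ 0 := ne_of_gt hr0
      have hr0div : r0^2 / r0 = r0 := by
        rw [pow_two, mul_div_assoc, div_self hr0ne, mul_one]
      rw [hp0, hpj, hq0, hqj]
      calc (C*a + S*(-b/r0)) * (C*b - S*(a/r0)) - (C*b + S*(a/r0)) * (C*a - S*(-b/r0))
          = -(2*C*S*((a^2+b^2)/r0)) := by field_simp; ring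
        _ = -(2*C*S*r0) := by rw [← hr0sq, hr0div]
    rw [hdet, abs_neg, abs_of_nonneg (by positivity)]
    calc C*S^3/4 = 2*C*S*ρ := by rw [hρdef]; ring
      _ ≤ 2*C*S*r0 := mul_le_mul_of_nonneg_left hρr0 (by positivity)
  · -- Case 2 : c is nearly orthogonal to the (0,j)-plane
    push_neg at hcase
    have ha2 : a^2 ≤ ρ^2 := by linarith [sq_nonneg b]
    have hb2 : b^2 ≤ ρ^2 := by linarith [sq_nonneg a]
    have haρ : |a| ≤ ρ := abs_le_of_sq_le' ha2 hρ.le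
    have hbρ : |b| ≤ ρ := abs_le_of_sq_le' hb2 hρ.le
    have hρ64 : ρ^2 ≤ 1/64 := by nlinarith [hρ.le, hρ8]
    have ha64 : a^2 ≤ 1/64 := le_trans ha2 hρ64
    have hb64 : b^2 ≤ 1/64 := le_trans hb2 hρ64
    set N1 := Real.sqrt (1 - a^2) with hN1def
    have hN1sq : N1^2 = 1 - a^2 := Real.sq_sqrt (by linarith)
    have hN1 : 0 < N1 := Real.sqrt_pos.mpr (by linarith)
    have hN1le : N1 ≤ 1 := Real.sqrt_le_one.mpr (by linarith [sq_nonneg a])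
    set v : Esp n := N1⁻¹ • (E0 - a • c) with hvdef
    have hcE0c : ⟪c, E0 - a • c⟫ = 0 := by
      rw [inner_sub_right, real_inner_smul_right, hcE0, hcc]; ring
    have hcv : ⟪c, v⟫ = 0 := by rw [hvdef, real_inner_smul_right, hcE0c, mul_zero]
    have hE0cnormsq : ‖E0 - a • c‖^2 = 1 - a^2 := by
      have h := norm_sub_sq_real E0 (a • c)
      rw [real_inner_smul_right, norm_smul] at h
      have hE0c : ⟪E0, c⟫ = a := by rw [real_inner_comm]; exact hcE0
      rw [hE0c, hE0def, EuclideanSpace.norm_single] at h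
      simp only [Real.norm_eq_abs, norm_one, hc] at h
      rw [h, mul_one, sq_abs]; ring
    have hE0cnorm : ‖E0 - a • c‖ = N1 := eq_of_sq_eq (norm_nonneg _) (Real.sqrt_nonneg _) (by rw [hE0cnormsq, hN1sq])
    have hv : ‖v‖ = 1 := by
      rw [hvdef, norm_smul, Real.norm_eq_abs, abs_of_pos (inv_pos.mpr hN1), hE0cnorm,
        inv_mul_cancel₀ (ne_of_gt hN1)]
    have hv0 : v 0 = N1 := by
      rw [hvdef, coord_smul, coord_sub, coord_smul, hE00, ← hadef]
      have : (1 : ℝ) - a * a = N1^2 := by rw [hN1sq]; ring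
      rw [this, pow_two]
      field_simp
    set e : ℝ := -(a*b)/N1 with hedef
    have hvj : v j = e := by
      rw [hvdef, coord_smul, coord_sub, coord_smul, hE0j, ← hbdef, hedef]
      field_simp
      ring
    have heN1 : e * N1 = -(a*b) := by
      rw [hedef]; field_simp
    have he2 : e^2 * (1 - a^2) = a^2 * b^2 := by
      have : e^2 * N1^2 = a^2*b^2 := by
        have := congrArg (fun x => x^2) heN1
        simpa [mul_pow] using this
      rwa [hN1sq] at this
    have he2le : e^2 ≤ 1/1000 := arith8 he2 ha64 hb64 (sq_nonneg a) (sq_nonneg b) (sq_nonneg e)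
    have he1 : |e| ≤ 1 :=
      abs_le_of_sq_le' (le_trans he2le (show (1:ℝ)/1000 ≤ 1^2 by norm_num)) (by norm_num)
    set u : Esp n := Ej - b • c - e • v with hudef
    have hvc : ⟪v, c⟫ = 0 := by rw [real_inner_comm]; exact hcv
    have hcu : ⟪c, u⟫ = 0 := by
      rw [hudef, inner_sub_right, inner_sub_right, real_inner_smul_right,
        real_inner_smul_right, hcEj, hcc, hcv]
      ring
    have hEjv : ⟪Ej, v⟫ = e := by
      rw [hEjdef, EuclideanSpace.inner_single_left]
      simp [← hvj, hEjdef]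
    have hvv : ⟪v, v⟫ = 1 := by rw [real_inner_self_eq_norm_sq, hv]; norm_num
    have hvEj : ⟪v, Ej⟫ = e := by rw [real_inner_comm]; exact hEjv
    have hvu : ⟪v, u⟫ = 0 := by
      rw [hudef, inner_sub_right, inner_sub_right, real_inner_smul_right,
        real_inner_smul_right, hvEj, hvc, hvv]
      ring
    have hEjc : ⟪Ej, c⟫ = b := by rw [real_inner_comm]; exact hcEj
    have hEjEj : ⟪Ej, Ej⟫ = 1 := by
      rw [real_inner_self_eq_norm_sq, hEjdef, EuclideanSpace.norm_single]; norm_num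
    have hunormsq : ‖u‖^2 = 1 - b^2 - e^2 := by
      have h1 : ⟪u, u⟫ = ‖u‖^2 := real_inner_self_eq_norm_sq u
      have h2 : ⟪u, u⟫ = ⟪Ej, u⟫ - b * ⟪c, u⟫ - e * ⟪v, u⟫ := by
        rw [hudef, inner_sub_left, inner_sub_left, real_inner_smul_left, real_inner_smul_left]
      have h3 : ⟪Ej, u⟫ = 1 - b^2 - e^2 := by
        rw [hudef, inner_sub_right, inner_sub_right, real_inner_smul_right,
          real_inner_smul_right, hEjEj, hEjc, hEjv]
        ring
      rw [hcu, hvu, h3] at h2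
      rw [← h1, h2]; ring
    have hN2pos' : (0:ℝ) < 1 - b^2 - e^2 := by linarith
    set N2 := Real.sqrt (1 - b^2 - e^2) with hN2def
    have hN2sq : N2^2 = 1 - b^2 - e^2 := Real.sq_sqrt hN2pos'.le
    have hN2 : 0 < N2 := Real.sqrt_pos.mpr hN2pos'
    have hN2le : N2 ≤ 1 := Real.sqrt_le_one.mpr (by linarith [sq_nonneg b, sq_nonneg e])
    have hunorm : ‖u‖ = N2 := eq_of_sq_eq (norm_nonneg u) hN2.le (by rw [hunormsq, hN2sq])
    set v' : Esp n := N2⁻¹ • u with hv'def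
    have hv' : ‖v'‖ = 1 := by
      rw [hv'def, norm_smul, Real.norm_eq_abs, abs_of_pos (inv_pos.mpr hN2), hunorm,
        inv_mul_cancel₀ (ne_of_gt hN2)]
    have hcv' : ⟪c, v'⟫ = 0 := by rw [hv'def, real_inner_smul_right, hcu, mul_zero]
    have hu0 : u 0 = 0 := by
      rw [hudef, coord_sub, coord_sub, coord_smul, coord_smul, hEj0, ← hadef, hv0]
      rw [show e * N1 = -(a*b) from heN1]; ring
    have huj : u j = 1 - b^2 - e^2 := by
      rw [hudef, coord_sub, coord_sub, coord_smul, coord_smul, hEjj, ← hbdef, hvj]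
      ring
    have hv'0 : v' 0 = 0 := by rw [hv'def, coord_smul, hu0, mul_zero]
    have hv'j : v' j = N2 := by
      rw [hv'def, coord_smul, huj, ← hN2sq, pow_two]
      field_simp
    obtain ⟨hp1, hpc⟩ := unit_comb hc hv hcv t
    obtain ⟨hq1, hqc⟩ := unit_comb hc hv' hcv' t
    refine ⟨C • c + S • v, C • c + S • v', hp1, hq1, hpc, hqc, ?_⟩
    have hp0 : (C • c + S • v) 0 = C*a + S*N1 := by
      rw [coord_add, coord_smul, coord_smul, hv0, hadef]
    have hpj : (C • c + S • v) j = C*b + S*e := by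
      rw [coord_add, coord_smul, coord_smul, hvj, hbdef]
    have hq0 : (C • c + S • v') 0 = C*a := by
      rw [coord_add, coord_smul, coord_smul, hv'0, hadef]; ring
    have hqj : (C • c + S • v') j = C*b + S*N2 := by
      rw [coord_add, coord_smul, coord_smul, hv'j, hbdef]
    have hdet : (C • c + S • v) 0 * (C • c + S • v') j
        - (C • c + S • v) j * (C • c + S • v') 0
        = C*S*(a*N2 + b*N1 - a*e) + S^2*(N1*N2) := by
      rw [hp0, hpj, hq0, hqj]; ring
    rw [hdet]
    have hN1N2 : 7/10 ≤ N1 * N2 := by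
      have hsq : (N1*N2)^2 = (1 - a^2) * (1 - b^2 - e^2) := by
        rw [mul_pow, hN1sq, hN2sq]
      have h1 : 49/100 ≤ (N1*N2)^2 := by
        rw [hsq]
        exact arith3 ha64 hb64 he2le (sq_nonneg a) (sq_nonneg b) (sq_nonneg e)
      exact arith4 (mul_nonneg hN1.le hN2.le) h1
    have hm : -(3*ρ) ≤ a*N2 + b*N1 - a*e := by
      have h1 : -ρ ≤ a := neg_le_of_abs_le haρ
      have h2 : a ≤ ρ := le_of_abs_le haρ
      have h3 : -ρ ≤ b := neg_le_of_abs_le hbρ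
      have h4 : b ≤ ρ := le_of_abs_le hbρ
      have p1 : -ρ ≤ a*N2 := arith5 h1 hN2.le hN2le hρ.le
      have p2 : -ρ ≤ b*N1 := arith5 h3 hN1.le hN1le hρ.le
      have p3 : a*e ≤ ρ := by
        have habs : |a*e| ≤ ρ := by
          rw [abs_mul]
          calc |a| * |e| ≤ ρ*1 := mul_le_mul haρ he1 (abs_nonneg e) hρ.le
            _ = ρ := mul_one ρ
        exact le_of_abs_le habs
      linarith
    have hfin : C*S^3/4 ≤ C*S*(a*N2 + b*N1 - a*e) + S^2*(N1*N2) := by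
      have hm' : -(3*(S^2/8)) ≤ a*N2 + b*N1 - a*e := by rw [hρdef] at hm; linarith
      exact arith6 hC hC1 hS hS1 hm' hN1N2
    calc C*S^3/4 ≤ C*S*(a*N2 + b*N1 - a*e) + S^2*(N1*N2) := hfin
      _ ≤ |C*S*(a*N2 + b*N1 - a*e) + S^2*(N1*N2)| := le_abs_self _
end LemB2

/-- Lemma B.2: let `K i` be spherical `ε`-balls in `Sⁿ` and `d i` diagonal
matrices of determinant one with positive entries, the first entry being the
largest. If the images of the `K i` under the projective actions of the `d i`
converge to a singleton `{y}`, then `y = ±e₀`, eventually the first diagonal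
entry is strictly largest, and the ratio of the first entry to the maximum of
the others tends to infinity. -/


theorem diag_shrink_implies_attractor (n : ℕ) (hn : 1 ≤ n) (ε : ℝ) (hε : 0 < ε)
    (c : ℕ → Esp n) (hc : ∀ i, c i ∈ sphereSet n)
    (K : ℕ → Set (Esp n))
    (hK : ∀ i, K i = {x ∈ sphereSet n | sdist x (c i) ≤ ε})
    (μ : ℕ → Fin (n + 1) → ℝ) (hpos : ∀ i j, 0 < μ i j)
    (hdet : ∀ i, ∏ j, μ i j = 1)
    (hmax : ∀ i j, μ i j ≤ μ i 0)
    (y : Esp n)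
    (hlim : HConv (fun i => diagAct (μ i) '' K i) {y}) :
    (y = EuclideanSpace.single 0 1 ∨ y = -(EuclideanSpace.single 0 1)) ∧
    (∃ N : ℕ, ∀ i > N, ∀ j : Fin (n + 1), j ≠ 0 → μ i j < μ i 0) ∧
    Filter.Tendsto
      (fun i => μ i 0 / sSup {r : ℝ | ∃ j : Fin (n + 1), j ≠ 0 ∧ r = μ i j})
      Filter.atTop Filter.atTop := by
  classical
  set h : ℕ → ℝ := fun i => Metric.hausdorffDist (diagAct (μ i) '' K i) {y} with hhdef
  have hlim' : Filter.Tendsto h Filter.atTop (nhds 0) := hlim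
  have hcn : ∀ i, ‖c i‖ = 1 := fun i => hc i
  have hKmem : ∀ i (x : Esp n), x ∈ K i ↔ ‖x‖ = 1 ∧ Real.arccos ⟪x, c i⟫ ≤ ε := by
    intro i x
    rw [hK i]
    exact Iff.rfl
  have hcK : ∀ i, c i ∈ K i := by
    intro i
    rw [hKmem]
    refine ⟨hcn i, ?_⟩
    have h1 : ⟪c i, c i⟫ = 1 := by
      rw [real_inner_self_eq_norm_sq, hcn i]; norm_num
    rw [h1, Real.arccos_one]; exact hε.le
  have hpt : ∀ i, ∀ x ∈ K i, dist (diagAct (μ i) x) y ≤ h i := by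
    intro i x hx
    have hbdd : Bornology.IsBounded (diagAct (μ i) '' K i) := by
      apply Bornology.IsBounded.subset (Metric.isBounded_closedBall (x := (0 : Esp n)) (r := 1))
      rintro z ⟨x', hx', rfl⟩
      rw [Metric.mem_closedBall, dist_zero_right]
      exact le_of_eq (LemB2.diagAct_norm (hpos i) ((hKmem i x').mp hx').1)
    have hne : (diagAct (μ i) '' K i).Nonempty := ⟨_, Set.mem_image_of_mem _ (hcK i)⟩
    have hTop := Metric.hausdorffEdist_ne_top_of_nonempty_of_bounded hne (Set.singleton_nonempty y) hbdd
      Bornology.isBounded_singleton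
    have h2 := Metric.infDist_le_hausdorffDist_of_mem (Set.mem_image_of_mem _ hx) hTop
    rwa [Metric.infDist_singleton] at h2
  have hh0 : ∀ i, 0 ≤ h i := fun i => Metric.hausdorffDist_nonneg
  set t : ℝ := min ε (Real.pi / 2) / 2 with htdef
  have hπ := Real.pi_pos
  have ht0 : 0 < t := by
    rw [htdef]
    apply div_pos (lt_min hε (by linarith)) (by norm_num)
  have ht4 : t ≤ Real.pi / 4 := by
    rw [htdef]
    have := min_le_right ε (Real.pi / 2)
    linarith
  have htε : t ≤ ε := by
    rw [htdef]
    have := min_le_left ε (Real.pi / 2)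
    linarith
  have htπ : t ≤ Real.pi := by linarith
  set ρ0 : ℝ := Real.cos t * Real.sin t ^ 3 / 4 with hρ0def
  have hρ0 : 0 < ρ0 := by
    have hS : 0 < Real.sin t := Real.sin_pos_of_pos_of_lt_pi ht0 (by linarith)
    have hC : 0 < Real.cos t := Real.cos_pos_of_mem_Ioo ⟨by linarith, by linarith⟩
    rw [hρ0def]
    positivity
  -- the key quantitative bounds, coming from the two special points in each ball
  have key : ∀ i, ∀ jj : Fin (n + 1), jj ≠ 0 →
      μ i jj / μ i 0 ≤ 4 / ρ0 * h i ∧ |y jj| ≤ (1 + 8 / ρ0 ^ 2) * h i := by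
    intro i jj hjj
    obtain ⟨p, q, hp1, hq1, hpc, hqc, hdetpq⟩ :=
      LemB2.exists_good_pair jj hjj (hcn i) ht0 ht4
    have hdet' : ρ0 ≤ |p 0 * q jj - p jj * q 0| := by rw [hρ0def]; exact hdetpq
    have harc : ∀ r : Esp n, ⟪r, c i⟫ = Real.cos t → Real.arccos ⟪r, c i⟫ ≤ ε := by
      intro r hr
      rw [hr, Real.arccos_cos ht0.le htπ]
      exact htε
    have hpK : p ∈ K i := (hKmem i p).mpr ⟨hp1, harc p hpc⟩
    have hqK : q ∈ K i := (hKmem i q).mpr ⟨hq1, harc q hqc⟩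
    have hNp0 : 0 < ‖diagVec (μ i) p‖ := LemB2.diagVec_norm_pos (hpos i) hp1
    have hNq0 : 0 < ‖diagVec (μ i) q‖ := LemB2.diagVec_norm_pos (hpos i) hq1
    have hNpμ : ‖diagVec (μ i) p‖ ≤ μ i 0 := LemB2.diagVec_norm_le (hpos i) (hmax i) hp1
    have hNqμ : ‖diagVec (μ i) q‖ ≤ μ i 0 := LemB2.diagVec_norm_le (hpos i) (hmax i) hq1
    have hz1 : ‖diagAct (μ i) p‖ = 1 := LemB2.diagAct_norm (hpos i) hp1
    have hw1 : ‖diagAct (μ i) q‖ = 1 := LemB2.diagAct_norm (hpos i) hq1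
    have hzy : dist (diagAct (μ i) p) y ≤ h i := hpt i p hpK
    have hwy : dist (diagAct (μ i) q) y ≤ h i := hpt i q hqK
    have hzw : ‖diagAct (μ i) p - diagAct (μ i) q‖ ≤ 2 * h i := by
      calc ‖diagAct (μ i) p - diagAct (μ i) q‖
          = dist (diagAct (μ i) p) (diagAct (μ i) q) := (dist_eq_norm _ _).symm
        _ ≤ dist (diagAct (μ i) p) y + dist y (diagAct (μ i) q) := dist_triangle _ _ _
        _ = dist (diagAct (μ i) p) y + dist (diagAct (μ i) q) y := by rw [dist_comm y]
        _ ≤ h i + h i := add_le_add hzy hwy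
        _ = 2 * h i := by ring
    have hcoord : ∀ k : Fin (n + 1), |diagAct (μ i) p k - diagAct (μ i) q k| ≤ 2 * h i := by
      intro k
      calc |diagAct (μ i) p k - diagAct (μ i) q k|
          = |(diagAct (μ i) p - diagAct (μ i) q) k| := by rw [LemB2.coord_sub]
        _ ≤ ‖diagAct (μ i) p - diagAct (μ i) q‖ := LemB2.abs_coord_le _ _
        _ ≤ 2 * h i := hzw
    have habsz : ∀ k, |diagAct (μ i) p k| ≤ 1 := fun k => by
      rw [← hz1]; exact LemB2.abs_coord_le _ _
    have habsw : ∀ k, |diagAct (μ i) q k| ≤ 1 := fun k => by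
      rw [← hw1]; exact LemB2.abs_coord_le _ _
    have hups : |diagAct (μ i) p 0 * diagAct (μ i) q jj
        - diagAct (μ i) p jj * diagAct (μ i) q 0| ≤ 4 * h i := by
      have e1 : diagAct (μ i) p 0 * diagAct (μ i) q jj
          - diagAct (μ i) p jj * diagAct (μ i) q 0
          = diagAct (μ i) p 0 * (diagAct (μ i) q jj - diagAct (μ i) p jj)
            + diagAct (μ i) p jj * (diagAct (μ i) p 0 - diagAct (μ i) q 0) := by ring
      rw [e1]
      have l1 : |diagAct (μ i) q jj - diagAct (μ i) p jj| ≤ 2 * h i := by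
        rw [abs_sub_comm]; exact hcoord jj
      have l2 : |diagAct (μ i) p 0 - diagAct (μ i) q 0| ≤ 2 * h i := hcoord 0
      calc |diagAct (μ i) p 0 * (diagAct (μ i) q jj - diagAct (μ i) p jj)
            + diagAct (μ i) p jj * (diagAct (μ i) p 0 - diagAct (μ i) q 0)|
          ≤ |diagAct (μ i) p 0 * (diagAct (μ i) q jj - diagAct (μ i) p jj)|
            + |diagAct (μ i) p jj * (diagAct (μ i) p 0 - diagAct (μ i) q 0)| := abs_add_le _ _
        _ = |diagAct (μ i) p 0| * |diagAct (μ i) q jj - diagAct (μ i) p jj|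
            + |diagAct (μ i) p jj| * |diagAct (μ i) p 0 - diagAct (μ i) q 0| := by
            rw [abs_mul, abs_mul]
        _ ≤ 1 * (2 * h i) + 1 * (2 * h i) :=
            add_le_add (mul_le_mul (habsz 0) l1 (abs_nonneg _) one_pos.le)
              (mul_le_mul (habsz jj) l2 (abs_nonneg _) one_pos.le)
        _ = 4 * h i := by ring
    have hlow : μ i jj / μ i 0 * ρ0 ≤ |diagAct (μ i) p 0 * diagAct (μ i) q jj
        - diagAct (μ i) p jj * diagAct (μ i) q 0| := by
      have e2 : diagAct (μ i) p 0 * diagAct (μ i) q jj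
          - diagAct (μ i) p jj * diagAct (μ i) q 0
          = (‖diagVec (μ i) p‖⁻¹ * ‖diagVec (μ i) q‖⁻¹) * (μ i 0 * μ i jj)
            * (p 0 * q jj - p jj * q 0) := by
        rw [LemB2.diagAct_apply, LemB2.diagAct_apply, LemB2.diagAct_apply,
          LemB2.diagAct_apply]
        ring
      rw [e2, abs_mul, abs_mul,
        abs_of_pos (mul_pos (inv_pos.mpr hNp0) (inv_pos.mpr hNq0)),
        abs_of_pos (mul_pos (hpos i 0) (hpos i jj))]
      have h3 : (μ i 0)⁻¹ ≤ ‖diagVec (μ i) p‖⁻¹ := inv_anti₀ hNp0 hNpμ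
      have h4 : (μ i 0)⁻¹ ≤ ‖diagVec (μ i) q‖⁻¹ := inv_anti₀ hNq0 hNqμ
      have hμ0 : (0:ℝ) < μ i 0 := hpos i 0
      have m1 : (μ i 0)⁻¹ * (μ i 0)⁻¹ ≤ ‖diagVec (μ i) p‖⁻¹ * ‖diagVec (μ i) q‖⁻¹ :=
        mul_le_mul h3 h4 (inv_nonneg.mpr (hpos i 0).le) (by positivity)
      have m2 : ((μ i 0)⁻¹ * (μ i 0)⁻¹) * (μ i 0 * μ i jj)
          ≤ (‖diagVec (μ i) p‖⁻¹ * ‖diagVec (μ i) q‖⁻¹) * (μ i 0 * μ i jj) :=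
        mul_le_mul_of_nonneg_right m1 (mul_nonneg (hpos i 0).le (hpos i jj).le)
      calc μ i jj / μ i 0 * ρ0
          = ((μ i 0)⁻¹ * (μ i 0)⁻¹) * (μ i 0 * μ i jj) * ρ0 := by
            field_simp
        _ ≤ (‖diagVec (μ i) p‖⁻¹ * ‖diagVec (μ i) q‖⁻¹) * (μ i 0 * μ i jj)
            * |p 0 * q jj - p jj * q 0| :=
            mul_le_mul m2 hdet' hρ0.le (mul_nonneg (by positivity) (mul_nonneg (hpos i 0).le (hpos i jj).le))
    have hμb : μ i jj / μ i 0 ≤ 4 / ρ0 * h i := by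
      have h5 := le_trans hlow hups
      rw [show (4 / ρ0 * h i : ℝ) = 4 * h i / ρ0 by ring]
      exact (le_div_iff₀ hρ0).mpr h5
    refine ⟨hμb, ?_⟩
    -- one of p, q has first coordinate at least ρ0 / 2
    have habsp : ∀ k, |p k| ≤ 1 := fun k => by rw [← hp1]; exact LemB2.abs_coord_le _ _
    have habsq : ∀ k, |q k| ≤ 1 := fun k => by rw [← hq1]; exact LemB2.abs_coord_le _ _
    have hbig : ρ0 / 2 ≤ |p 0| ∨ ρ0 / 2 ≤ |q 0| := by
      by_contra hcon
      push_neg at hcon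
      obtain ⟨hcon1, hcon2⟩ := hcon
      have hub : |p 0 * q jj - p jj * q 0| ≤ |p 0| + |q 0| := by
        have h6 := abs_add_le (p 0 * q jj) (-(p jj * q 0))
        rw [abs_neg, ← sub_eq_add_neg] at h6
        apply le_trans h6
        rw [abs_mul, abs_mul]
        have h7 : |p 0| * |q jj| ≤ |p 0| * 1 :=
          mul_le_mul_of_nonneg_left (habsq jj) (abs_nonneg _)
        have h8 : |p jj| * |q 0| ≤ 1 * |q 0| :=
          mul_le_mul_of_nonneg_right (habsp jj) (abs_nonneg _)
        linarith
      linarith [hdet']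
    have claim : ∀ x : Esp n, x ∈ K i → ρ0 / 2 ≤ |x 0| →
        |y jj| ≤ (1 + 8 / ρ0 ^ 2) * h i := by
      intro x hxK hx0
      have hx1 : ‖x‖ = 1 := ((hKmem i x).mp hxK).1
      have hN0 : 0 < ‖diagVec (μ i) x‖ := LemB2.diagVec_norm_pos (hpos i) hx1
      have hNl : μ i 0 * |x 0| ≤ ‖diagVec (μ i) x‖ := LemB2.coord_le_diagVec_norm (hpos i) x 0
      have hNl2 : μ i 0 * (ρ0 / 2) ≤ ‖diagVec (μ i) x‖ :=
        le_trans (mul_le_mul_of_nonneg_left hx0 (hpos i 0).le) hNl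
      have hzzy : dist (diagAct (μ i) x) y ≤ h i := hpt i x hxK
      have hzzjj : |diagAct (μ i) x jj| ≤ 2 / ρ0 * (μ i jj / μ i 0) := by
        rw [LemB2.diagAct_apply, abs_mul, abs_mul,
          abs_of_pos (inv_pos.mpr hN0), abs_of_pos (hpos i jj)]
        have hxjj : |x jj| ≤ 1 := by rw [← hx1]; exact LemB2.abs_coord_le _ _
        calc ‖diagVec (μ i) x‖⁻¹ * (μ i jj * |x jj|)
            ≤ ‖diagVec (μ i) x‖⁻¹ * (μ i jj * 1) := by
              apply mul_le_mul_of_nonneg_left _ (by positivity)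
              exact mul_le_mul_of_nonneg_left hxjj (hpos i jj).le
          _ = μ i jj / ‖diagVec (μ i) x‖ := by rw [mul_one, inv_mul_eq_div]
          _ ≤ μ i jj / (μ i 0 * (ρ0 / 2)) := by
              gcongr
              · exact (hpos i jj).le
              · exact mul_pos (hpos i 0) (half_pos hρ0)
          _ = 2 / ρ0 * (μ i jj / μ i 0) := by
              field_simp
      have htri : |y jj| ≤ |y jj - diagAct (μ i) x jj| + |diagAct (μ i) x jj| := by
        have h9 := abs_add_le (y jj - diagAct (μ i) x jj) (diagAct (μ i) x jj)
        rw [sub_add_cancel] at h9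
        exact h9
      have hsub : |y jj - diagAct (μ i) x jj| ≤ h i := by
        calc |y jj - diagAct (μ i) x jj| = |(y - diagAct (μ i) x) jj| := by
              rw [LemB2.coord_sub]
          _ ≤ ‖y - diagAct (μ i) x‖ := LemB2.abs_coord_le _ _
          _ = dist (diagAct (μ i) x) y := by rw [← dist_eq_norm, dist_comm]
          _ ≤ h i := hzzy
      have hmul := mul_le_mul_of_nonneg_left hμb (show (0:ℝ) ≤ 2 / ρ0 from div_nonneg (by norm_num) hρ0.le)
      have hfin2 : |y jj| ≤ h i + 2 / ρ0 * (4 / ρ0 * h i) := by linarith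
      apply le_trans hfin2
      apply le_of_eq
      field_simp [hρ0.ne']
      ring
    rcases hbig with hb | hb
    · exact claim p hpK hb
    · exact claim q hqK hb
  -- all off-axis coordinates of y vanish
  have hyjj : ∀ jj : Fin (n + 1), jj ≠ 0 → y jj = 0 := by
    intro jj hjj
    have hb : ∀ i, |y jj| ≤ (1 + 8 / ρ0 ^ 2) * h i := fun i => (key i jj hjj).2
    have htend : Filter.Tendsto (fun i => (1 + 8 / ρ0 ^ 2) * h i) Filter.atTop (nhds 0) := by
      have := hlim'.const_mul (1 + 8 / ρ0 ^ 2)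
      simpa using this
    have h0 : |y jj| ≤ 0 := ge_of_tendsto htend (Filter.Eventually.of_forall hb)
    exact abs_eq_zero.mp (le_antisymm h0 (abs_nonneg _))
  -- y has norm one
  have hy1 : ‖y‖ = 1 := by
    have hb : ∀ i, |‖y‖ - 1| ≤ h i := by
      intro i
      have hz1 : ‖diagAct (μ i) (c i)‖ = 1 := LemB2.diagAct_norm (hpos i) (hcn i)
      have hd : dist (diagAct (μ i) (c i)) y ≤ h i := hpt i (c i) (hcK i)
      calc |‖y‖ - 1| = |‖y‖ - ‖diagAct (μ i) (c i)‖| := by rw [hz1]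
        _ ≤ ‖y - diagAct (μ i) (c i)‖ := abs_norm_sub_norm_le _ _
        _ = dist (diagAct (μ i) (c i)) y := by rw [← dist_eq_norm, dist_comm]
        _ ≤ h i := hd
    have h0 : |‖y‖ - 1| ≤ 0 := ge_of_tendsto hlim' (Filter.Eventually.of_forall hb)
    have h1 := abs_eq_zero.mp (le_antisymm h0 (abs_nonneg _))
    linarith
  -- part 1
  have hy0sq : y 0 * y 0 = 1 := by
    have hsum := LemB2.sum_sq_eq_one hy1
    have h2 : ∑ k, (y k) ^ 2 = (y 0) ^ 2 := by
      apply Finset.sum_eq_single_of_mem 0 (Finset.mem_univ 0)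
      intro k _ hk
      rw [hyjj k hk]
      ring
    rw [h2] at hsum
    nlinarith [hsum]
  have hpart1 : y = EuclideanSpace.single 0 1 ∨ y = -(EuclideanSpace.single 0 1) := by
    rcases mul_self_eq_one_iff.mp hy0sq with h1 | h1
    · left
      ext k
      by_cases hk : k = 0
      · subst hk
        rw [h1, EuclideanSpace.single_apply]
        simp
      · rw [hyjj k hk, EuclideanSpace.single_apply]
        simp [hk]
    · right
      ext k
      by_cases hk : k = 0
      · subst hk
        rw [h1, LemB2.coord_neg, EuclideanSpace.single_apply]
        simp
      · rw [hyjj k hk, LemB2.coord_neg, EuclideanSpace.single_apply]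
        simp [hk]
  -- the supremum of the remaining entries
  have hfin : ∀ i, ({r : ℝ | ∃ jj : Fin (n + 1), jj ≠ 0 ∧ r = μ i jj}).Finite := by
    intro i
    have h1 : {r : ℝ | ∃ jj : Fin (n + 1), jj ≠ 0 ∧ r = μ i jj}
        = (fun jj => μ i jj) '' {jj : Fin (n + 1) | jj ≠ 0} := by
      ext r
      constructor
      · rintro ⟨jj, hjj, rfl⟩
        exact ⟨jj, hjj, rfl⟩
      · rintro ⟨jj, hjj, rfl⟩
        exact ⟨jj, hjj, rfl⟩
    rw [h1]
    exact Set.Finite.image _ (Set.toFinite _)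
  have hne : ∀ i, {r : ℝ | ∃ jj : Fin (n + 1), jj ≠ 0 ∧ r = μ i jj}.Nonempty := by
    intro i
    have hj1 : ((⟨1, by omega⟩ : Fin (n + 1))) ≠ 0 := by
      intro hcon
      have := congrArg Fin.val hcon
      simp at this
    exact ⟨μ i ⟨1, by omega⟩, ⟨⟨1, by omega⟩, hj1, rfl⟩⟩
  have hmem : ∀ i, sSup {r : ℝ | ∃ jj : Fin (n + 1), jj ≠ 0 ∧ r = μ i jj}
      ∈ {r : ℝ | ∃ jj : Fin (n + 1), jj ≠ 0 ∧ r = μ i jj} :=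
    fun i => Set.Nonempty.csSup_mem (hne i) (hfin i)
  have hSle : ∀ i (jj : Fin (n + 1)), jj ≠ 0 →
      μ i jj ≤ sSup {r : ℝ | ∃ jj : Fin (n + 1), jj ≠ 0 ∧ r = μ i jj} := by
    intro i jj hjj
    exact le_csSup ((hfin i).bddAbove) ⟨jj, hjj, rfl⟩
  have hSpos : ∀ i, 0 < sSup {r : ℝ | ∃ jj : Fin (n + 1), jj ≠ 0 ∧ r = μ i jj} := by
    intro i
    obtain ⟨jj, hjj, hr⟩ := hmem i
    rw [hr]
    exact hpos i jj
  have hratio : Filter.Tendsto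
      (fun i => sSup {r : ℝ | ∃ jj : Fin (n + 1), jj ≠ 0 ∧ r = μ i jj} / μ i 0)
      Filter.atTop (nhds 0) := by
    apply squeeze_zero (g := fun i => 4 / ρ0 * h i)
      (fun i => le_of_lt (div_pos (hSpos i) (hpos i 0)))
    · intro i
      obtain ⟨jj, hjj, hr⟩ := hmem i
      rw [hr]
      exact (key i jj hjj).1
    · have := hlim'.const_mul (4 / ρ0)
      simpa using this
  have hratio' : Filter.Tendsto
      (fun i => μ i 0 / sSup {r : ℝ | ∃ jj : Fin (n + 1), jj ≠ 0 ∧ r = μ i jj})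
      Filter.atTop Filter.atTop := by
    have h1 : Filter.Tendsto
        (fun i => sSup {r : ℝ | ∃ jj : Fin (n + 1), jj ≠ 0 ∧ r = μ i jj} / μ i 0)
        Filter.atTop (nhdsWithin 0 (Set.Ioi 0)) := by
      rw [tendsto_nhdsWithin_iff]
      exact ⟨hratio, Filter.Eventually.of_forall fun i => div_pos (hSpos i) (hpos i 0)⟩
    have h2 := h1.inv_tendsto_nhdsGT_zero
    have h3 : (fun i => sSup {r : ℝ | ∃ jj : Fin (n + 1), jj ≠ 0 ∧ r = μ i jj} / μ i 0)⁻¹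
        = fun i => μ i 0 / sSup {r : ℝ | ∃ jj : Fin (n + 1), jj ≠ 0 ∧ r = μ i jj} := by
      funext i
      rw [Pi.inv_apply, inv_div]
    rwa [h3] at h2
  refine ⟨hpart1, ?_, hratio'⟩
  obtain ⟨N, hN⟩ := Filter.eventually_atTop.mp (hratio'.eventually_gt_atTop 1)
  refine ⟨N, fun i hi jj hjj => ?_⟩
  have h1 : 1 < μ i 0 / sSup {r : ℝ | ∃ jj : Fin (n + 1), jj ≠ 0 ∧ r = μ i jj} := hN i hi.le
  have h2 : sSup {r : ℝ | ∃ jj : Fin (n + 1), jj ≠ 0 ∧ r = μ i jj} < μ i 0 :=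
    (one_lt_div (hSpos i)).mp h1
  exact lt_of_le_of_lt (hSle i jj hjj) h2
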